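/- If a behavior b : ℝ≥0 → Set P is non-Berkeley for δ > 0, then any two distinct transition points t₁ < t₂ of b satisfy t₂ - t₁ ≥ δ. -/

import Mathlib

open Set

/-- A behavior `b : ℝ≥0 → Set P` is non-Berkeley for `δ`. -/
def NonBerkeley {P : Type*} (b : ℝ → Set P) (δ : ℝ) : Prop :=
  ∀ t : ℝ, 0 ≤ t → ∃ u : ℝ, 0 ≤ u ∧ u ≤ t ∧ t ≤ u + δ ∧
    ∀ s₁ ∈ Icc u (u + δ), ∀ s₂ ∈ Icc u (u + δ), b s₁ = b s₂

/-- `t` is a transition point of `b` on ℝ≥0. -/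
def TransitionPt {P : Type*} (b : ℝ → Set P) (t : ℝ) : Prop :=
  0 ≤ t ∧ ∀ ε > 0, ∃ s₁ s₂ : ℝ, 0 ≤ s₁ ∧ 0 ≤ s₂ ∧ |s₁ - t| < ε ∧ |s₂ - t| < ε ∧ b s₁ ≠ b s₂

/-- Two distinct transition points of a `δ`-non-Berkeley behavior are at least `δ` apart. -/
theorem transitionPoints_far {P : Type*} (b : ℝ → Set P) (δ : ℝ) (hδ : 0 < δ)
    (hb : NonBerkeley b δ) (t₁ t₂ : ℝ)
    (h₁ : TransitionPt b t₁) (h₂ : TransitionPt b t₂) (hlt : t₁ < t₂) :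
    δ ≤ t₂ - t₁ := by
  by_contra h
  push_neg at h
  set t : ℝ := (t₁ + t₂) / 2 with ht
  have ht1 : t₁ < t := by simp [ht]; linarith
  have ht2 : t < t₂ := by simp [ht]; linarith
  have ht0 : 0 ≤ t := le_trans h₁.1 ht1.le
  obtain ⟨u, hu0, hut, htu, hconst⟩ := hb t ht0
  have key : ∀ c : ℝ, u < c → c < u + δ →
      (∀ ε > 0, ∃ s₁ s₂ : ℝ, 0 ≤ s₁ ∧ 0 ≤ s₂ ∧ |s₁ - c| < ε ∧ |s₂ - c| < ε ∧ b s₁ ≠ b s₂) →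
      False := by
    intro c hc1 hc2 htr
    obtain ⟨s₁, s₂, _, _, hs1, hs2, hne⟩ := htr (min (c - u) (u + δ - c))
      (lt_min (by linarith) (by linarith))
    apply hne
    have m1 : |s₁ - c| < c - u := lt_of_lt_of_le hs1 (min_le_left _ _)
    have m1' : |s₁ - c| < u + δ - c := lt_of_lt_of_le hs1 (min_le_right _ _)
    have m2 : |s₂ - c| < c - u := lt_of_lt_of_le hs2 (min_le_left _ _)
    have m2' : |s₂ - c| < u + δ - c := lt_of_lt_of_le hs2 (min_le_right _ _)
    rw [abs_lt] at m1 m1' m2 m2'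
    exact hconst s₁ ⟨by linarith [m1.1], by linarith [m1'.2]⟩
      s₂ ⟨by linarith [m2.1], by linarith [m2'.2]⟩
  rcases lt_or_ge t₂ (u + δ) with hc | hc
  · exact key t₂ (lt_of_le_of_lt hut ht2) hc h₂.2
  · exact key t₁ (by linarith) (by linarith) h₁.2
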